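/- Let $Q$ be transition rates of a continuous-time Markov chain on a finite set $\Omega$, fix $x \neq y$, and let $C : \Omega \times \Omega \to \mathbb{R}_{\geq 0}$ be coupling rates, i.e., $\sum_w C(v,w) = Q(x,v)$ for all $v$ and $\sum_v C(v,w) = Q(y,w)$ for all $w$ (so in particular $\sum_{v,w}C(v,w) = \sum_v Q(x,v) = \sum_w Q(y,w) =: M$). Then for every $t$ with $0 < t \leq (M - C(x,y))^{-1}$, the function $\Gamma_t(v,w) := tC(v,w)$ for $(v,w) \neq (x,y)$ and $\Gamma_t(x,y) := 1 - Mt + C(x,y)t$ is a coupling of the probability measures $(\delta_x \tilde{P}_t, \delta_y \tilde{P}_t)$, where $\tilde{P}_t = I + tL$ and $L$ is the generator with rates $Q$. -/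
import Mathlib


theorem stmt18 {Ω : Type*} [Fintype Ω] [DecidableEq Ω]
    (Q : Ω → Ω → ℝ) (hQ : ∀ v w, 0 ≤ Q v w)
    (x y : Ω) (hxy : x ≠ y)
    (C : Ω → Ω → ℝ) (hC : ∀ v w, 0 ≤ C v w)
    (hC1 : ∀ v, ∑ w, C v w = Q x v)
    (hC2 : ∀ w, ∑ v, C v w = Q y w)
    (M : ℝ) (hM : M = ∑ v, ∑ w, C v w)
    (t : ℝ) (ht : 0 < t) (ht' : t * (M - C x y) ≤ 1)
    (Γ : Ω → Ω → ℝ)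
    (hΓ : ∀ v w, Γ v w = if (v, w) = (x, y) then 1 - M * t + C x y * t else t * C v w) :
    (∀ v w, 0 ≤ Γ v w) ∧
    (∀ v, ∑ w, Γ v w = (if v = x then 1 else 0) + t * (Q x v - (if v = x then ∑ w, Q x w else 0))) ∧
    (∀ w, ∑ v, Γ v w = (if w = y then 1 else 0) + t * (Q y w - (if w = y then ∑ v, Q y v else 0))) := by
  have hMx : M = ∑ w, Q x w := by
    rw [hM]; exact Finset.sum_congr rfl fun v _ => hC1 v
  have hMy : M = ∑ w, Q y w := by
    rw [hM, Finset.sum_comm]; exact Finset.sum_congr rfl fun w _ => hC2 w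
  have key : ∀ v w, Γ v w = t * C v w + (if (v, w) = (x, y) then 1 - M * t else 0) := by
    intro v w
    rw [hΓ]
    by_cases h : (v, w) = (x, y)
    · obtain ⟨hv, hw⟩ := Prod.mk.injEq .. ▸ h
      subst hv; subst hw; simp; ring
    · simp [h]
  refine ⟨?_, ?_, ?_⟩
  · intro v w
    rw [hΓ]
    by_cases h : (v, w) = (x, y)
    · simp only [h, if_pos]
      nlinarith
    · simp only [h, if_neg, if_false]
      exact mul_nonneg ht.le (hC v w)
  · intro v
    simp only [key]
    rw [Finset.sum_add_distrib, ← Finset.mul_sum, hC1]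
    by_cases hv : v = x
    · have h1 : ∀ w, (if ((v : Ω), w) = (x, y) then (1 : ℝ) - M * t else 0)
          = if w = y then 1 - M * t else 0 := by
        intro w; simp [hv]
      simp only [h1, Finset.sum_ite_eq' Finset.univ y, Finset.mem_univ, if_true,
        if_pos hv, hv, ← hMx]
      simp only [Prod.mk.injEq, true_and, eq_self_iff_true, and_true,
        Finset.sum_ite_eq' Finset.univ y, Finset.mem_univ, if_true]
      ring
    · have : ∀ w, (if ((v : Ω), w) = (x, y) then (1 : ℝ) - M * t else 0) = 0 := by
        intro w; simp [hv]
      simp [this, hv]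
  · intro w
    simp only [key]
    rw [Finset.sum_add_distrib]
    have hcol : ∑ v, t * C v w = t * Q y w := by rw [← Finset.mul_sum, hC2]
    rw [hcol]
    by_cases hw : w = y
    · have h1 : ∀ v, (if ((v : Ω), w) = (x, y) then (1 : ℝ) - M * t else 0)
          = if v = x then 1 - M * t else 0 := by
        intro v; simp [hw]
      simp only [h1, Finset.sum_ite_eq' Finset.univ x, Finset.mem_univ, if_true,
        if_pos hw, hw, ← hMy]
      simp only [Prod.mk.injEq, true_and, eq_self_iff_true, and_true,
        Finset.sum_ite_eq' Finset.univ x, Finset.mem_univ, if_true]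
      ring
    · have : ∀ v, (if ((v : Ω), w) = (x, y) then (1 : ℝ) - M * t else 0) = 0 := by
        intro v; simp [hw]
      simp [this, hw]
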